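/- Let G be a finite nonempty set, p > 0, and w, c : G → ℝ with w_g > 0 and c_g > 0 for all g. The function alpha ↦ sum_g w_g c_g alpha_g^{-p} on the open probability simplex {alpha : alpha_g > 0, sum_g alpha_g = 1} attains its minimum at the unique point alpha*_g = (w_g c_g)^{1/(p+1)} / sum_{g'} (w_{g'} c_{g'})^{1/(p+1)}, and the minimum value equals ( sum_g (w_g c_g)^{1/(p+1)} )^{p+1}. -/

import Mathlib

open Finset

private lemma wr_key_lt (p : ℝ) (hp : 0 < p) {u : ℝ} (hu : 0 < u) (hne : u ≠ 1) :
    1 + p < u ^ (-p) + p * u := by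
  set f : ℝ → ℝ := fun x => x ^ (-p) + p * x with hfdef
  have hderiv : ∀ x : ℝ, 0 < x → HasDerivAt f (-p * x ^ (-p - 1) + p) x := by
    intro x hx
    have h1 : HasDerivAt (fun y : ℝ => y ^ (-p)) (-p * x ^ (-p - 1)) x :=
      Real.hasDerivAt_rpow_const (Or.inl hx.ne')
    have h2 : HasDerivAt (fun y : ℝ => p * y) p x := by
      simpa using (hasDerivAt_id x).const_mul p
    exact h1.add h2
  have hcont : ∀ s : Set ℝ, (∀ x ∈ s, (0:ℝ) < x) → ContinuousOn f s := by
    intro s hs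
    apply ContinuousOn.add
    · exact ContinuousOn.rpow_const continuousOn_id fun x hx => Or.inl (hs x hx).ne'
    · exact (continuous_const.mul continuous_id).continuousOn
  have hf1 : f 1 = 1 + p := by simp [hfdef]
  rcases lt_or_gt_of_ne hne with h | h
  · have hanti : StrictAntiOn f (Set.Icc u 1) := by
      apply strictAntiOn_of_deriv_neg (convex_Icc u 1)
        (hcont _ (fun x hx => lt_of_lt_of_le hu hx.1))
      intro x hx
      rw [interior_Icc] at hx
      have hx0 : 0 < x := lt_trans hu hx.1
      rw [(hderiv x hx0).deriv]
      have h1 : 1 < x ^ (-p - 1) :=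
        (Real.one_lt_rpow_iff_of_pos hx0).2 (Or.inr ⟨hx.2, by linarith⟩)
      nlinarith
    have := hanti (Set.left_mem_Icc.2 h.le) (Set.right_mem_Icc.2 h.le) h
    rw [hf1] at this; exact this
  · have hmono : StrictMonoOn f (Set.Icc 1 u) := by
      apply strictMonoOn_of_deriv_pos (convex_Icc 1 u)
        (hcont _ (fun x hx => lt_of_lt_of_le one_pos hx.1))
      intro x hx
      rw [interior_Icc] at hx
      have hx0 : (0:ℝ) < x := lt_trans one_pos hx.1
      rw [(hderiv x hx0).deriv]
      have h1 : x ^ (-p - 1) < 1 :=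
        Real.rpow_lt_one_of_one_lt_of_neg hx.1 (by linarith)
      nlinarith
    have := hmono (Set.left_mem_Icc.2 h.le) (Set.right_mem_Icc.2 h.le) h
    rw [hf1] at this; exact this

private lemma wr_key_le (p : ℝ) (hp : 0 < p) {u : ℝ} (hu : 0 < u) :
    1 + p ≤ u ^ (-p) + p * u := by
  rcases eq_or_ne u 1 with rfl | hne
  · simp
  · exact (wr_key_lt p hp hu hne).le

theorem weighted_risk_optimal_allocation
    {G : Type*} [Fintype G] [Nonempty G]
    (p : ℝ) (hp : 0 < p)
    (w c : G → ℝ) (hw : ∀ g, 0 < w g) (hc : ∀ g, 0 < c g)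
    (S : Set (G → ℝ)) (hS : S = {α : G → ℝ | (∀ g, 0 < α g) ∧ ∑ g, α g = 1})
    (F : (G → ℝ) → ℝ) (hF : ∀ α, F α = ∑ g, w g * c g * α g ^ (-p))
    (α : G → ℝ)
    (hα : ∀ g, α g = (w g * c g) ^ (1 / (p + 1)) /
        ∑ g', (w g' * c g') ^ (1 / (p + 1))) :
    α ∈ S ∧
    (∀ b ∈ S, F α ≤ F b) ∧
    (∀ b ∈ S, F b = F α → b = α) ∧
    F α = (∑ g, (w g * c g) ^ (1 / (p + 1))) ^ (p + 1) := by
  subst hS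
  have hp1 : (0:ℝ) < p + 1 := by linarith
  set a : G → ℝ := fun g => (w g * c g) ^ (1 / (p + 1)) with ha_def
  have ha : ∀ g, 0 < a g := fun g => Real.rpow_pos_of_pos (mul_pos (hw g) (hc g)) _
  set T : ℝ := ∑ g, a g with hT_def
  have hT : 0 < T := Finset.sum_pos (fun g _ => ha g) Finset.univ_nonempty
  have hαg : ∀ g, α g = a g / T := fun g => hα g
  have hαpos : ∀ g, 0 < α g := by
    intro g; rw [hαg g]; exact div_pos (ha g) hT
  have hwc : ∀ g, a g ^ (p + 1) = w g * c g := by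
    intro g
    show ((w g * c g) ^ (1 / (p + 1))) ^ (p + 1) = w g * c g
    rw [← Real.rpow_mul (mul_pos (hw g) (hc g)).le, one_div_mul_cancel hp1.ne',
      Real.rpow_one]
  have hsumα : ∑ g, α g = 1 := by
    rw [Finset.sum_congr rfl (fun g _ => hαg g), ← Finset.sum_div, ← hT_def,
      div_self hT.ne']
  -- value at α
  have hFα : F α = T ^ (p + 1) := by
    rw [hF]
    have hterm : ∀ g ∈ Finset.univ (α := G), w g * c g * α g ^ (-p) = a g * T ^ p := by
      intro g _
      rw [hαg g, ← hwc g, Real.div_rpow (ha g).le hT.le, Real.rpow_neg hT.le p]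
      have h1 : a g ^ (p + 1) * a g ^ (-p) = a g := by
        rw [← Real.rpow_add (ha g), show p + 1 + -p = 1 by ring, Real.rpow_one]
      rw [div_eq_mul_inv, inv_inv]
      linear_combination (T ^ p) * h1
    rw [Finset.sum_congr rfl hterm, ← Finset.sum_mul, ← hT_def,
      Real.rpow_add hT p 1, Real.rpow_one]
    ring
  -- per-term inequalities for b in the simplex
  have hterm_le : ∀ (b : G → ℝ), (∀ g, 0 < b g) → ∀ g : G,
      (1 + p) * (a g * T ^ p) ≤ w g * c g * b g ^ (-p) + p * (T ^ (p + 1) * b g) := by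
    intro b hb g
    have hu : 0 < b g * T / a g := div_pos (mul_pos (hb g) hT) (ha g)
    have hkey := wr_key_le p hp hu
    have hM : 0 < a g * T ^ p := mul_pos (ha g) (Real.rpow_pos_of_pos hT p)
    have hid1 : a g * T ^ p * ((b g * T / a g) ^ (-p)) = w g * c g * b g ^ (-p) := by
      rw [← hwc g, Real.div_rpow (mul_pos (hb g) hT).le (ha g).le,
        Real.mul_rpow (hb g).le hT.le, Real.rpow_neg (ha g).le p,
        div_eq_mul_inv, inv_inv]
      have h2 : T ^ p * T ^ (-p) = 1 := by
        rw [← Real.rpow_add hT]; simp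
      have h1' : a g ^ (p + 1) = a g ^ p * a g := by
        rw [Real.rpow_add (ha g) p 1, Real.rpow_one]
      linear_combination b g ^ (-p) * a g * a g ^ p * h2 - b g ^ (-p) * h1'
    have hid2 : a g * T ^ p * (b g * T / a g) = T ^ (p + 1) * b g := by
      have h3 : T ^ (p + 1) = T ^ p * T := by
        rw [Real.rpow_add hT p 1, Real.rpow_one]
      rw [h3]
      field_simp [(ha g).ne']
    nlinarith [mul_le_mul_of_nonneg_left hkey hM.le]
  have hterm_lt : ∀ (b : G → ℝ), (∀ g, 0 < b g) → ∀ g : G, b g ≠ α g →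
      (1 + p) * (a g * T ^ p) < w g * c g * b g ^ (-p) + p * (T ^ (p + 1) * b g) := by
    intro b hb g hne
    have hu : 0 < b g * T / a g := div_pos (mul_pos (hb g) hT) (ha g)
    have hune : b g * T / a g ≠ 1 := by
      intro h
      apply hne
      rw [hαg g]
      field_simp [(ha g).ne', hT.ne'] at h ⊢
      linarith
    have hkey := wr_key_lt p hp hu hune
    have hM : 0 < a g * T ^ p := mul_pos (ha g) (Real.rpow_pos_of_pos hT p)
    have hid1 : a g * T ^ p * ((b g * T / a g) ^ (-p)) = w g * c g * b g ^ (-p) := by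
      rw [← hwc g, Real.div_rpow (mul_pos (hb g) hT).le (ha g).le,
        Real.mul_rpow (hb g).le hT.le, Real.rpow_neg (ha g).le p,
        div_eq_mul_inv, inv_inv]
      have h2 : T ^ p * T ^ (-p) = 1 := by
        rw [← Real.rpow_add hT]; simp
      have h1' : a g ^ (p + 1) = a g ^ p * a g := by
        rw [Real.rpow_add (ha g) p 1, Real.rpow_one]
      linear_combination b g ^ (-p) * a g * a g ^ p * h2 - b g ^ (-p) * h1'
    have hid2 : a g * T ^ p * (b g * T / a g) = T ^ (p + 1) * b g := by
      have h3 : T ^ (p + 1) = T ^ p * T := by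
        rw [Real.rpow_add hT p 1, Real.rpow_one]
      rw [h3]
      field_simp [(ha g).ne']
    nlinarith [mul_lt_mul_of_pos_left hkey hM]
  have hsumL : ∑ g, (1 + p) * (a g * T ^ p) = (1 + p) * T ^ (p + 1) := by
    rw [← Finset.mul_sum, ← Finset.sum_mul, ← hT_def, Real.rpow_add hT p 1,
      Real.rpow_one]
    ring
  have hsumR : ∀ (b : G → ℝ), ∑ g, b g = 1 →
      ∑ g, (w g * c g * b g ^ (-p) + p * (T ^ (p + 1) * b g))
        = F b + p * T ^ (p + 1) := by
    intro b hbsum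
    rw [Finset.sum_add_distrib, ← hF b, ← Finset.mul_sum, ← Finset.mul_sum, hbsum]
    ring
  refine ⟨⟨hαpos, hsumα⟩, ?_, ?_, ?_⟩
  · intro b hb
    obtain ⟨hbpos, hbsum⟩ := hb
    have hsum : ∑ g, (1 + p) * (a g * T ^ p)
        ≤ ∑ g, (w g * c g * b g ^ (-p) + p * (T ^ (p + 1) * b g)) :=
      Finset.sum_le_sum (fun g _ => hterm_le b hbpos g)
    rw [hsumL, hsumR b hbsum] at hsum
    rw [hFα]
    linarith
  · intro b hb hFb
    obtain ⟨hbpos, hbsum⟩ := hb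
    by_contra hne
    obtain ⟨g0, hg0⟩ : ∃ g, b g ≠ α g := by
      by_contra hall
      push_neg at hall
      exact hne (funext hall)
    have hsum : ∑ g, (1 + p) * (a g * T ^ p)
        < ∑ g, (w g * c g * b g ^ (-p) + p * (T ^ (p + 1) * b g)) :=
      Finset.sum_lt_sum (fun g _ => hterm_le b hbpos g)
        ⟨g0, Finset.mem_univ g0, hterm_lt b hbpos g0 hg0⟩
    rw [hsumL, hsumR b hbsum] at hsum
    rw [hFb, hFα] at hsum
    linarith
  · rw [hFα]
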